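/- Let α, β > −1 be real and let m, n be natural numbers with m ≠ n. Then ∫_{−1}^{1} J_m^{(α,β)}(x) J_n^{(α,β)}(x) (1 − x)^{α} (1 + x)^{β} dx = 0. That is, the Jacobi polynomials with parameters (α, β) are pairwise orthogonal on (−1, 1) with respect to the weight function ω(x) = (1 − x)^{α}(1 + x)^{β}. -/

import Mathlib

open Real MeasureTheory intervalIntegral Finset Nat

/-- The rising factorial (Pochhammer symbol) `(a)_k = a (a+1) ⋯ (a+k-1)`, with `(a)_0 = 1`. -/
noncomputable def risingFactorial (a : ℝ) (k : ℕ) : ℝ :=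
  ∏ j ∈ Finset.range k, (a + j)

/-- The Jacobi polynomial, given by the explicit formula
`J n^(α,β) x = ((α+1)_n / n!) ∑_{k=0}^{n} C(n,k) ((n+α+β+1)_k / (α+1)_k) ((x-1)/2)^k`. -/
noncomputable def jacobiPoly (α β : ℝ) (n : ℕ) (x : ℝ) : ℝ :=
  (risingFactorial (α + 1) n / (n ! : ℝ)) *
    ∑ k ∈ Finset.range (n + 1),
      (n.choose k : ℝ) *
        (risingFactorial ((n : ℝ) + α + β + 1) k / risingFactorial (α + 1) k) *
        ((x - 1) / 2) ^ k

namespace JacobiAux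

lemma rf_succ (a : ℝ) (k : ℕ) :
    risingFactorial a (k + 1) = risingFactorial a k * (a + k) :=
  Finset.prod_range_succ _ k

lemma rf_pos {a : ℝ} (ha : 0 < a) (k : ℕ) : 0 < risingFactorial a k :=
  Finset.prod_pos fun j _ => by positivity

lemma rf_add (a : ℝ) (j k : ℕ) :
    risingFactorial a (j + k) = risingFactorial a j * risingFactorial (a + j) k := by
  rw [risingFactorial, risingFactorial, risingFactorial, Finset.prod_range_add]
  congr 1
  refine Finset.prod_congr rfl fun i _ => ?_
  push_cast; ring

open Polynomial in
lemma fwdDiff_polyEval (P : ℝ[X]) :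
    fwdDiff (1 : ℕ) (fun k : ℕ => P.eval (k : ℝ)) =
      fun k : ℕ => (P.comp (X + C 1) - P).eval (k : ℝ) := by
  funext k
  simp only [fwdDiff, eval_sub, eval_comp, eval_add, eval_X, eval_C]
  push_cast
  ring_nf

open Polynomial in
lemma degree_comp_sub (P : ℝ[X]) (hP : P ≠ 0) :
    (P.comp (X + C 1) - P).degree < P.degree := by
  have hq : (X + C (1 : ℝ)).natDegree = 1 := natDegree_X_add_C 1
  have hlc : (P.comp (X + C 1)).leadingCoeff = P.leadingCoeff := by
    rw [leadingCoeff_comp (by rw [hq]; exact one_ne_zero),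
      (monic_X_add_C (1 : ℝ)).leadingCoeff, one_pow, mul_one]
  have hne : P.comp (X + C 1) ≠ 0 := fun h => hP <| leadingCoeff_eq_zero.mp <| by
    rw [← hlc, h, leadingCoeff_zero]
  have hdeg : (P.comp (X + C 1)).degree = P.degree := by
    rw [degree_eq_natDegree hne, degree_eq_natDegree hP, natDegree_comp, hq, mul_one]
  exact lt_of_lt_of_le (degree_sub_lt hdeg hne hlc) (le_of_eq hdeg)

open Polynomial in
lemma fwdDiff_iter_polyEval (n : ℕ) : ∀ P : ℝ[X], P.degree < (n : ℕ) →
    (fwdDiff (1 : ℕ))^[n] (fun k : ℕ => P.eval (k : ℝ)) = 0 := by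
  induction n with
  | zero =>
    intro P hP
    have hP0 : P = 0 := degree_eq_bot.mp (Nat.WithBot.lt_zero_iff.mp (by exact_mod_cast hP))
    subst hP0
    funext k
    simp
  | succ n ih =>
    intro P hP
    by_cases h0 : P = 0
    · subst h0
      simp only [eval_zero]
      exact Function.iterate_fixed (_root_.funext fun x => sub_self _) (n + 1)
    · rw [Function.iterate_succ_apply, fwdDiff_polyEval]
      refine ih _ (lt_of_lt_of_le (degree_comp_sub P h0) ?_)
      rw [degree_eq_natDegree h0]
      exact_mod_cast Nat.lt_succ_iff.mp ((natDegree_lt_iff_degree_lt h0).mpr hP)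

open Polynomial in
lemma alt_sum_poly (n : ℕ) (P : ℝ[X]) (hP : P.degree < (n : ℕ)) :
    ∑ k ∈ Finset.range (n + 1), (-1 : ℝ) ^ k * (n.choose k : ℝ) * P.eval (k : ℝ) = 0 := by
  have h0 := fwdDiff_iter_eq_sum_shift (1 : ℕ) (fun k : ℕ => P.eval (k : ℝ)) n 0
  rw [fwdDiff_iter_polyEval n P hP] at h0
  simp only [Pi.zero_apply, zero_add, smul_eq_mul, mul_one, zsmul_eq_mul, Int.cast_mul,
    Int.cast_pow, Int.cast_neg, Int.cast_one, Int.cast_natCast] at h0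
  have hc : ∀ k ∈ Finset.range (n + 1), (-1 : ℝ) ^ k * (n.choose k : ℝ) * P.eval (k : ℝ)
      = (-1 : ℝ) ^ n * ((-1 : ℝ) ^ (n - k) * (n.choose k : ℝ) * P.eval (k : ℝ)) := by
    intro k hk
    have hk' : k ≤ n := Nat.lt_succ_iff.mp (Finset.mem_range.mp hk)
    have e1 : (-1 : ℝ) ^ n = (-1 : ℝ) ^ (n - k) * (-1 : ℝ) ^ k := by
      rw [← pow_add, Nat.sub_add_cancel hk']
    have e2 : ((-1 : ℝ) ^ (n - k)) * ((-1 : ℝ) ^ (n - k)) = 1 := by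
      rw [← mul_pow]; norm_num
    rw [e1]
    linear_combination (-((-1 : ℝ) ^ k * (n.choose k : ℝ) * P.eval (k : ℝ))) * e2
  rw [Finset.sum_congr rfl hc, ← Finset.mul_sum, ← h0, mul_zero]

open Polynomial in
lemma alt_sum_two (n j d : ℕ) (hn : n = j + d + 1) (c e : ℝ) :
    ∑ k ∈ Finset.range (n + 1), (-1 : ℝ) ^ k * (n.choose k : ℝ) *
      (risingFactorial (c + k) j * risingFactorial (e + k) d) = 0 := by
  set P : ℝ[X] := (∏ i ∈ Finset.range j, (X + C (c + i))) *
    (∏ i ∈ Finset.range d, (X + C (e + i))) with hPdef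
  have hdeg : P.degree < (n : ℕ) := by
    rw [hPdef, degree_mul, degree_prod, degree_prod]
    simp only [degree_X_add_C, Finset.sum_const, Finset.card_range, nsmul_eq_mul, mul_one]
    rw [hn]
    exact_mod_cast (by omega : j + d < j + d + 1)
  have heval : ∀ k : ℕ, P.eval (k : ℝ)
      = risingFactorial (c + k) j * risingFactorial (e + k) d := by
    intro k
    rw [hPdef]
    simp only [eval_mul, eval_prod, eval_add, eval_X, eval_C, risingFactorial]
    congr 1 <;> exact Finset.prod_congr rfl fun i _ => by ring
  refine Eq.trans (Finset.sum_congr rfl fun k _ => ?_) (alt_sum_poly n P hdeg)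
  rw [heval]

lemma wInt {a b : ℝ} (ha : -1 < a) (hb : -1 < b) :
    IntervalIntegrable (fun x : ℝ => (1 - x) ^ a * (1 + x) ^ b) volume (-1) 1 := by
  have h1 : IntervalIntegrable (fun x : ℝ => (1 - x) ^ a * (1 + x) ^ b) volume (-1) 0 := by
    have hb' : IntervalIntegrable (fun x : ℝ => (1 + x) ^ b) volume (-1) 0 := by
      have h := (intervalIntegrable_rpow' hb (a := 0) (b := 1)).comp_add_right 1
      norm_num at h
      simpa [add_comm] using h
    have hcont : ContinuousOn (fun x : ℝ => (1 - x) ^ a) (Set.uIcc (-1) 0) := by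
      refine ContinuousOn.rpow_const (by fun_prop) fun x hx => Or.inl ?_
      rw [Set.uIcc_of_le (by norm_num : (-1:ℝ) ≤ 0)] at hx
      have : x ≤ 0 := hx.2
      nlinarith
    have := hb'.continuousOn_mul hcont
    simpa [mul_comm] using this
  have h2 : IntervalIntegrable (fun x : ℝ => (1 - x) ^ a * (1 + x) ^ b) volume 0 1 := by
    have ha' : IntervalIntegrable (fun x : ℝ => (1 - x) ^ a) volume 0 1 := by
      have h := (intervalIntegrable_rpow' ha (a := 0) (b := 1)).comp_sub_left 1
      norm_num at h
      exact h.symm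
    have hcont : ContinuousOn (fun x : ℝ => (1 + x) ^ b) (Set.uIcc 0 1) := by
      refine ContinuousOn.rpow_const (by fun_prop) fun x hx => Or.inl ?_
      rw [Set.uIcc_of_le (by norm_num : (0:ℝ) ≤ 1)] at hx
      have : 0 ≤ x := hx.1
      nlinarith
    exact ha'.mul_continuousOn hcont
  exact h1.trans h2

lemma moment_rec {a b : ℝ} (ha : -1 < a) (hb : -1 < b) :
    (a + b + 2) * ∫ x in (-1:ℝ)..1, (1 - x) ^ (a + 1) * (1 + x) ^ b
      = 2 * (a + 1) * ∫ x in (-1:ℝ)..1, (1 - x) ^ a * (1 + x) ^ b := by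
  have ha1 : (0:ℝ) < a + 1 := by linarith
  have hb1 : (0:ℝ) < b + 1 := by linarith
  set F : ℝ → ℝ := fun x => (1 - x) ^ (a + 1) * (1 + x) ^ (b + 1) with hF
  have hcont : ContinuousOn F (Set.Icc (-1) 1) := by
    apply Continuous.continuousOn
    exact ((continuous_const.sub continuous_id').rpow_const fun x => Or.inr ha1.le).mul
      ((continuous_const.add continuous_id').rpow_const fun x => Or.inr hb1.le)
  have hderiv : ∀ x ∈ Set.Ioo (-1:ℝ) 1, HasDerivAt F
      ((a + b + 2) * ((1 - x) ^ (a + 1) * (1 + x) ^ b)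
        - 2 * (a + 1) * ((1 - x) ^ a * (1 + x) ^ b)) x := by
    intro x hx
    have hx1 : 0 < 1 - x := by linarith [hx.2]
    have hx2 : 0 < 1 + x := by linarith [hx.1]
    have d1 : HasDerivAt (fun x : ℝ => (1 - x) ^ (a + 1)) (-(a + 1) * (1 - x) ^ a) x := by
      have h := HasDerivAt.rpow_const (p := a + 1)
        ((hasDerivAt_id x).const_sub 1) (Or.inl hx1.ne')
      simp only [id_eq] at h
      convert h using 1
      rw [add_sub_cancel_right]
      ring
    have d2 : HasDerivAt (fun x : ℝ => (1 + x) ^ (b + 1)) ((b + 1) * (1 + x) ^ b) x := by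
      have h := HasDerivAt.rpow_const (p := b + 1)
        ((hasDerivAt_id x).const_add 1) (Or.inl hx2.ne')
      simp only [id_eq] at h
      convert h using 1
      rw [add_sub_cancel_right]
      ring
    have h := d1.mul d2
    refine h.congr_deriv ?_
    rw [Real.rpow_add_one hx1.ne' a, Real.rpow_add_one hx2.ne' b]
    ring
  have hint : IntervalIntegrable (fun x : ℝ =>
      (a + b + 2) * ((1 - x) ^ (a + 1) * (1 + x) ^ b)
        - 2 * (a + 1) * ((1 - x) ^ a * (1 + x) ^ b)) volume (-1) 1 :=
    ((wInt (by linarith : (-1:ℝ) < a + 1) hb).const_mul _).sub ((wInt ha hb).const_mul _)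
  have heq := integral_eq_sub_of_hasDerivAt_of_le (by norm_num) hcont hderiv hint
  rw [intervalIntegral.integral_sub ((wInt (by linarith : (-1:ℝ) < a + 1) hb).const_mul _)
      ((wInt ha hb).const_mul _),
    intervalIntegral.integral_const_mul, intervalIntegral.integral_const_mul] at heq
  have hF1 : F 1 = 0 := by
    simp only [hF]
    rw [show (1:ℝ) - 1 = 0 by ring, Real.zero_rpow ha1.ne']
    ring
  have hFm1 : F (-1) = 0 := by
    simp only [hF]
    rw [show (1:ℝ) + (-1) = 0 by ring, Real.zero_rpow hb1.ne']
    ring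
  rw [hF1, hFm1] at heq
  linarith

lemma moment_formula {a b : ℝ} (ha : -1 < a) (hb : -1 < b) (p : ℕ) :
    risingFactorial (a + b + 2) p * ∫ x in (-1:ℝ)..1, (1 - x) ^ (a + p) * (1 + x) ^ b
      = 2 ^ p * risingFactorial (a + 1) p * ∫ x in (-1:ℝ)..1, (1 - x) ^ a * (1 + x) ^ b := by
  induction p with
  | zero => simp [risingFactorial]
  | succ p ih =>
    have hp0 : (0:ℝ) ≤ p := Nat.cast_nonneg p
    have hap : (-1:ℝ) < a + p := by linarith
    have hrec := moment_rec hap hb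
    have hcast : a + ((p:ℕ) + 1 : ℕ) = (a + p) + 1 := by push_cast; ring
    rw [rf_succ, rf_succ, hcast, pow_succ]
    have hab2 : a + (p:ℝ) + b + 2 = a + b + 2 + p := by ring
    rw [hab2] at hrec
    linear_combination risingFactorial (a + b + 2) p * hrec + 2 * (a + (p:ℝ) + 1) * ih

lemma T_formula {a b : ℝ} (ha : -1 < a) (hb : -1 < b) (p : ℕ) :
    ∫ x in (-1:ℝ)..1, ((x - 1) / 2) ^ p * ((1 - x) ^ a * (1 + x) ^ b)
      = (-1 : ℝ) ^ p * (risingFactorial (a + 1) p / risingFactorial (a + b + 2) p) *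
        ∫ x in (-1:ℝ)..1, (1 - x) ^ a * (1 + x) ^ b := by
  have h1 : ∫ x in (-1:ℝ)..1, ((x - 1) / 2) ^ p * ((1 - x) ^ a * (1 + x) ^ b)
      = (-1/2 : ℝ) ^ p * ∫ x in (-1:ℝ)..1, (1 - x) ^ (a + p) * (1 + x) ^ b := by
    rw [← intervalIntegral.integral_const_mul]
    rw [intervalIntegral.integral_of_le (by norm_num : (-1:ℝ) ≤ 1),
      intervalIntegral.integral_of_le (by norm_num : (-1:ℝ) ≤ 1),
      MeasureTheory.integral_Ioc_eq_integral_Ioo, MeasureTheory.integral_Ioc_eq_integral_Ioo]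
    apply MeasureTheory.setIntegral_congr_fun measurableSet_Ioo
    intro x hx
    dsimp only
    have hx1 : 0 < 1 - x := by linarith [hx.2]
    have e1 : ((x - 1) / 2 : ℝ) ^ p = (-1/2 : ℝ) ^ p * (1 - x) ^ p := by
      rw [← mul_pow]; congr 1; ring
    rw [Real.rpow_add hx1 a p, Real.rpow_natCast, e1]
    ring
  have hm := moment_formula ha hb p
  have hpos := rf_pos (show (0:ℝ) < a + b + 2 by linarith) p
  have h2p : ((-1/2 : ℝ)) ^ p * 2 ^ p = (-1 : ℝ) ^ p := by
    rw [← mul_pow]; norm_num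
  rw [h1]
  have hJ : (-1 : ℝ) ^ p * (risingFactorial (a + 1) p / risingFactorial (a + b + 2) p) *
        (∫ x in (-1:ℝ)..1, (1 - x) ^ a * (1 + x) ^ b)
      = ((-1 : ℝ) ^ p * risingFactorial (a + 1) p *
        ∫ x in (-1:ℝ)..1, (1 - x) ^ a * (1 + x) ^ b) / risingFactorial (a + b + 2) p := by
    ring
  rw [hJ, eq_div_iff hpos.ne']
  linear_combination (-1/2 : ℝ) ^ p * hm + ((risingFactorial (a + 1) p *
    ∫ x in (-1:ℝ)..1, (1 - x) ^ a * (1 + x) ^ b) * h2p)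

lemma key_sum {α β : ℝ} (hα : -1 < α) (hβ : -1 < β) {n j : ℕ} (hj : j < n) :
    ∑ k ∈ Finset.range (n + 1),
      (n.choose k : ℝ) * (risingFactorial ((n : ℝ) + α + β + 1) k / risingFactorial (α + 1) k) *
        ((-1 : ℝ) ^ (j + k) *
          (risingFactorial (α + 1) (j + k) / risingFactorial (α + β + 2) (j + k))) = 0 := by
  obtain ⟨d, rfl⟩ : ∃ d, n = j + d + 1 := ⟨n - (j + 1), by omega⟩
  have hab2 : (0:ℝ) < α + β + 2 := by linarith
  have hα1 : (0:ℝ) < α + 1 := by linarith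
  have hcongr : ∀ k ∈ Finset.range (j + d + 1 + 1),
      ((j + d + 1).choose k : ℝ) *
        (risingFactorial (((j + d + 1 : ℕ) : ℝ) + α + β + 1) k / risingFactorial (α + 1) k) *
        ((-1 : ℝ) ^ (j + k) *
          (risingFactorial (α + 1) (j + k) / risingFactorial (α + β + 2) (j + k)))
      = ((-1 : ℝ) ^ j / risingFactorial (α + β + 2) (j + d)) *
        ((-1 : ℝ) ^ k * ((j + d + 1).choose k : ℝ) *
          (risingFactorial ((α + 1) + k) j * risingFactorial ((α + β + 2 + j) + k) d)) := by
    intro k _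
    have p1 := rf_pos hα1 k
    have p2 := rf_pos hab2 (j + k)
    have p3 := rf_pos hab2 (j + d)
    have A1 : risingFactorial (α + 1) (j + k)
        = risingFactorial (α + 1) k * risingFactorial ((α + 1) + k) j := by
      rw [Nat.add_comm j k, rf_add]
    have A2 : risingFactorial (α + β + 2) (j + d) *
          risingFactorial (((j + d + 1 : ℕ) : ℝ) + α + β + 1) k
        = risingFactorial (α + β + 2) (j + k) * risingFactorial ((α + β + 2 + j) + k) d := by
      have e1 := rf_add (α + β + 2) (j + d) k
      have e2 := rf_add (α + β + 2) (j + k) d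
      have e3 : (j + d) + k = (j + k) + d := by omega
      have e4 : α + β + 2 + ((j + d : ℕ) : ℝ) = ((j + d + 1 : ℕ) : ℝ) + α + β + 1 := by
        push_cast; ring
      have e5 : α + β + 2 + ((j + k : ℕ) : ℝ) = (α + β + 2 + j) + k := by push_cast; ring
      rw [e4] at e1
      rw [e5] at e2
      rw [← e1, e3, e2]
    push_cast at A2 ⊢
    rw [pow_add, A1]
    field_simp
    linear_combination (((j + d + 1).choose k : ℝ) * risingFactorial ((α + 1) + k) j) * A2
  rw [Finset.sum_congr rfl hcongr, ← Finset.mul_sum,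
    alt_sum_two (j + d + 1) j d rfl (α + 1) (α + β + 2 + j), mul_zero]

set_option maxHeartbeats 1000000 in
lemma ortho_lt (α β : ℝ) (hα : -1 < α) (hβ : -1 < β) (m n : ℕ) (hmn : m < n) :
    ∫ x in (-1:ℝ)..1,
      jacobiPoly α β m x * jacobiPoly α β n x * (1 - x) ^ α * (1 + x) ^ β = 0 := by
  set cm : ℝ := risingFactorial (α + 1) m / (m ! : ℝ) with hcm
  set cn : ℝ := risingFactorial (α + 1) n / (n ! : ℝ) with hcn
  set A : ℕ → ℝ := fun j => (m.choose j : ℝ) *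
    (risingFactorial ((m : ℝ) + α + β + 1) j / risingFactorial (α + 1) j) with hA
  set B : ℕ → ℝ := fun k => (n.choose k : ℝ) *
    (risingFactorial ((n : ℝ) + α + β + 1) k / risingFactorial (α + 1) k) with hB
  have hbase : ∀ p : ℕ, IntervalIntegrable
      (fun x : ℝ => ((x - 1) / 2) ^ p * ((1 - x) ^ α * (1 + x) ^ β)) volume (-1) 1 := by
    intro p
    exact (wInt hα hβ).continuousOn_mul (Continuous.continuousOn (by fun_prop))
  have hintegrand : ∀ x : ℝ,
      jacobiPoly α β m x * jacobiPoly α β n x * (1 - x) ^ α * (1 + x) ^ β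
      = ∑ j ∈ Finset.range (m + 1), ∑ k ∈ Finset.range (n + 1),
          (cm * A j) * (cn * B k) * (((x - 1) / 2) ^ (j + k) * ((1 - x) ^ α * (1 + x) ^ β)) := by
    intro x
    have e1 : jacobiPoly α β m x * jacobiPoly α β n x * (1 - x) ^ α * (1 + x) ^ β
        = ((∑ j ∈ Finset.range (m + 1), A j * ((x - 1) / 2) ^ j) *
            ∑ k ∈ Finset.range (n + 1), B k * ((x - 1) / 2) ^ k) *
          ((cm * cn) * ((1 - x) ^ α * (1 + x) ^ β)) := by
      rw [jacobiPoly, jacobiPoly, ← hcm, ← hcn]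
      ring
    rw [e1, Finset.sum_mul_sum, Finset.sum_mul]
    refine Finset.sum_congr rfl fun j _ => ?_
    rw [Finset.sum_mul]
    refine Finset.sum_congr rfl fun k _ => ?_
    rw [pow_add]
    ring
  have hEq : Set.EqOn
      (fun x : ℝ => jacobiPoly α β m x * jacobiPoly α β n x * (1 - x) ^ α * (1 + x) ^ β)
      (fun x : ℝ => ∑ j ∈ Finset.range (m + 1), ∑ k ∈ Finset.range (n + 1),
          (cm * A j) * (cn * B k) * (((x - 1) / 2) ^ (j + k) * ((1 - x) ^ α * (1 + x) ^ β)))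
      (Set.uIcc (-1) 1) := fun x _ => hintegrand x
  rw [intervalIntegral.integral_congr hEq]
  rw [intervalIntegral.integral_finset_sum]
  swap
  · intro j _
    rw [← Finset.sum_fn]
    exact IntervalIntegrable.sum _ fun k _ => (hbase (j + k)).const_mul _
  refine Finset.sum_eq_zero fun j hj => ?_
  rw [intervalIntegral.integral_finset_sum (fun k _ => (hbase (j + k)).const_mul _)]
  have hjn : j < n := lt_of_le_of_lt (Nat.lt_succ_iff.mp (Finset.mem_range.mp hj)) hmn
  have hred : ∀ k ∈ Finset.range (n + 1),
      (∫ x in (-1:ℝ)..1, (cm * A j) * (cn * B k) *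
        (((x - 1) / 2) ^ (j + k) * ((1 - x) ^ α * (1 + x) ^ β)))
      = ((cm * A j) * cn * (∫ x in (-1:ℝ)..1, (1 - x) ^ α * (1 + x) ^ β)) *
        (B k * ((-1 : ℝ) ^ (j + k) *
          (risingFactorial (α + 1) (j + k) / risingFactorial (α + β + 2) (j + k)))) := by
    intro k _
    rw [intervalIntegral.integral_const_mul, T_formula hα hβ (j + k)]
    ring
  rw [Finset.sum_congr rfl hred, ← Finset.mul_sum, key_sum hα hβ hjn, mul_zero]

end JacobiAux

/-- For `α, β > -1`, the Jacobi polynomials with parameters `(α, β)` are pairwise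
orthogonal on `(-1, 1)` with respect to the weight `(1 - x)^α (1 + x)^β`. -/
theorem jacobiPoly_orthogonal (α β : ℝ) (hα : -1 < α) (hβ : -1 < β)
    (m n : ℕ) (hmn : m ≠ n) :
    ∫ x in (-1:ℝ)..1,
      jacobiPoly α β m x * jacobiPoly α β n x * (1 - x) ^ α * (1 + x) ^ β = 0 := by
  rcases hmn.lt_or_gt with h | h
  · exact JacobiAux.ortho_lt α β hα hβ m n h
  · rw [← JacobiAux.ortho_lt α β hα hβ n m h]
    apply intervalIntegral.integral_congr
    intro x _
    ring
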